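/- Let A be the commutative monoid (ℚ/ℤ) × ℕ written multiplicatively (its group of units is A^× = (ℚ/ℤ) × {0}). Let B be a commutative monoid and φ : A → B a monoid homomorphism satisfying: (1) φ is local: if φ(a) is invertible in B then a is invertible in A; (2) every non-invertible element of B can be written as φ(a)·b with a a non-invertible element of A and b ∈ B; (3) φ is injective on the units of A; (4) for every b ∈ B there exists n ≥ 1 with b^n ∈ φ(A); (5) for every a ∈ A and every n ≥ 1 the equation x^n = φ(a) has at most n solutions in B; (6) B is finitely generated as an A-module: there exist b₁, …, b_r ∈ B with B = φ(A)b₁ ∪ ⋯ ∪ φ(A)b_r; (7) the A-action on B is cancellative: φ(a)x = φ(a)y implies x = y for all a ∈ A and x, y ∈ B. Then φ is an isomorphism of monoids (bijective). -/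

import Mathlib

namespace Stmt4Aux

open Multiplicative

abbrev Q' : Type := ℚ ⧸ AddSubgroup.zmultiples (1 : ℚ)
abbrev A' : Type := Multiplicative (Q' × ℕ)

theorem isUnit_iff (a : A') : IsUnit a ↔ (toAdd a).2 = 0 := by
  constructor
  · rintro ⟨⟨u, v, huv, -⟩, rfl⟩
    have h := congrArg (fun z : A' => (toAdd z).2) huv
    simp only [toAdd_mul, toAdd_one, Prod.snd_add, Prod.snd_zero] at h
    have : (toAdd u).2 + (toAdd v).2 = 0 := h
    simpa using Nat.eq_zero_of_add_eq_zero_right this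
  · intro h
    have hgen : ∀ p : Q', IsUnit (ofAdd (p, (0:ℕ)) : A') := by
      intro p
      refine IsUnit.of_mul_eq_one (ofAdd (-p, 0)) ?_
      rw [← ofAdd_add]
      have : (p, (0:ℕ)) + (-p, 0) = (0 : Q' × ℕ) := by
        simp [Prod.ext_iff]
      rw [this, ofAdd_zero]
    have ha : a = ofAdd ((toAdd a).1, 0) := by
      conv_lhs => rw [← ofAdd_toAdd a]
      exact congrArg ofAdd (Prod.ext rfl h)
    rw [ha]
    exact hgen _

theorem factor (q : Q') (m : ℕ) :
    (ofAdd (q, m) : A') = ofAdd (q, 0) * ofAdd ((0 : Q'), 1) ^ m := by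
  rw [← ofAdd_nsmul, ← ofAdd_add]
  congr 1
  simp [Prod.ext_iff]

section

variable {B : Type*} [CommMonoid B] (φ : A' →* B)

theorem hfac (q : Q') (m : ℕ) :
    φ (ofAdd (q, m)) = φ (ofAdd (q, 0)) * φ (ofAdd ((0 : Q'), 1)) ^ m := by
  rw [factor, map_mul, map_pow]

theorem htk (m : ℕ) :
    φ (ofAdd ((0 : Q'), m)) = φ (ofAdd ((0 : Q'), 1)) ^ m := by
  rw [hfac]
  have : ((0 : Q'), (0:ℕ)) = (0 : Q' × ℕ) := rfl
  rw [this, ofAdd_zero, map_one, one_mul]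

theorem t_not_unit (h1 : ∀ a, IsUnit (φ a) → IsUnit a) :
    ¬ IsUnit (φ (ofAdd ((0 : Q'), 1))) := by
  intro h
  have h' := h1 _ h
  rw [isUnit_iff] at h'
  simp at h'

theorem key (h1 : ∀ a, IsUnit (φ a) → IsUnit a)
    (h3 : ∀ a a', IsUnit a → IsUnit a' → φ a = φ a' → a = a')
    (h7 : ∀ a, ∀ x y : B, φ a * x = φ a * y → x = y)
    (q q' : Q') (m m' : ℕ) (hle : m ≤ m')
    (h : φ (ofAdd (q, m)) = φ (ofAdd (q', m'))) : q = q' ∧ m = m' := by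
  set t := φ (ofAdd ((0 : Q'), 1)) with ht
  have hx : φ (ofAdd ((0:Q'), m)) * φ (ofAdd (q, 0))
      = φ (ofAdd ((0:Q'), m)) * (φ (ofAdd (q', 0)) * t ^ (m' - m)) := by
    rw [htk φ m]
    have e1 : t ^ m * φ (ofAdd (q, 0)) = φ (ofAdd (q, m)) := by
      rw [hfac φ q m, mul_comm]
    have e2 : t ^ m * (φ (ofAdd (q', 0)) * t ^ (m' - m)) = φ (ofAdd (q', m')) := by
      rw [hfac φ q' m']
      conv_rhs => rw [← Nat.sub_add_cancel hle, pow_add]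
      ac_rfl
    rw [e1, e2, h]
  have e4 := h7 _ _ _ hx
  have hq0 : IsUnit (ofAdd (q, 0) : A') := (isUnit_iff _).2 rfl
  have hq'0 : IsUnit (ofAdd (q', 0) : A') := (isUnit_iff _).2 rfl
  have hu : IsUnit (φ (ofAdd (q', 0)) * t ^ (m' - m)) := e4 ▸ hq0.map φ
  have htpow : IsUnit (t ^ (m' - m)) := (IsUnit.mul_iff.1 hu).2
  have hmm : m' - m = 0 := by
    by_contra hne
    exact t_not_unit φ h1 ((isUnit_pow_iff hne).1 htpow)
  have hm : m = m' := by omega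
  subst hm
  rw [hmm, pow_zero, mul_one] at e4
  have := h3 _ _ hq0 hq'0 e4
  have hqq : (q, (0:ℕ)) = (q', (0:ℕ)) := ofAdd.injective this
  exact ⟨congrArg Prod.fst hqq, rfl⟩

theorem inj (h1 : ∀ a, IsUnit (φ a) → IsUnit a)
    (h3 : ∀ a a', IsUnit a → IsUnit a' → φ a = φ a' → a = a')
    (h7 : ∀ a, ∀ x y : B, φ a * x = φ a * y → x = y) :
    Function.Injective φ := by
  intro a a' h
  obtain ⟨⟨q, m⟩, rfl⟩ : ∃ p : Q' × ℕ, a = ofAdd p := ⟨toAdd a, (ofAdd_toAdd a).symm⟩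
  obtain ⟨⟨q', m'⟩, rfl⟩ : ∃ p : Q' × ℕ, a' = ofAdd p := ⟨toAdd a', (ofAdd_toAdd a').symm⟩
  rcases le_total m m' with hle | hle
  · obtain ⟨rfl, rfl⟩ := key φ h1 h3 h7 q q' m m' hle h
    rfl
  · obtain ⟨rfl, rfl⟩ := key φ h1 h3 h7 q' q m' m hle h.symm
    rfl

theorem units_mem (h1 : ∀ a, IsUnit (φ a) → IsUnit a)
    (h4 : ∀ b : B, ∃ n : ℕ, 1 ≤ n ∧ b ^ n ∈ Set.range φ)
    (h5 : ∀ a, ∀ n : ℕ, 1 ≤ n →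
      ∀ s : Finset B, (∀ x ∈ s, x ^ n = φ a) → s.card ≤ n)
    (hinj : Function.Injective φ) :
    ∀ u : B, IsUnit u → u ∈ Set.range φ := by
  classical
  intro u hu
  obtain ⟨n, hn1, a, ha⟩ := h4 u
  have hau : IsUnit a := h1 a (ha ▸ hu.pow n)
  rw [isUnit_iff] at hau
  have haq : a = ofAdd ((toAdd a).1, 0) := by
    conv_lhs => rw [← ofAdd_toAdd a]
    exact congrArg ofAdd (Prod.ext rfl hau)
  set q := (toAdd a).1 with hq
  obtain ⟨x, hx⟩ := QuotientAddGroup.mk_surjective q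
  -- the candidate n-th roots
  set f : ℕ → B := fun k => φ (ofAdd ((((x + k) / n : ℚ) : Q'), 0)) with hf
  have hnQ : (n : ℚ) ≠ 0 := by positivity
  have hfpow : ∀ k : ℕ, f k ^ n = φ a := by
    intro k
    have h1' : n • ((((x + (k:ℚ)) / n : ℚ)) : Q') = ((x : ℚ) : Q') := by
      rw [← QuotientAddGroup.mk_nsmul]
      have : n • ((x + (k:ℚ)) / n) = x + (k:ℚ) := by
        rw [nsmul_eq_mul, mul_div_cancel₀ _ hnQ]
      rw [this, QuotientAddGroup.eq_iff_sub_mem]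
      refine AddSubgroup.mem_zmultiples_iff.2 ⟨(k : ℤ), ?_⟩
      simp
    have hpair : (n • (((((x + (k:ℚ)) / n : ℚ)) : Q'), (0:ℕ)) : Q' × ℕ)
        = (((x : ℚ) : Q'), 0) := by
      rw [Prod.smul_mk, smul_zero]
      exact Prod.ext h1' rfl
    show φ (ofAdd (((((x + (k:ℚ)) / n : ℚ)) : Q'), 0)) ^ n = φ a
    rw [← map_pow, ← ofAdd_nsmul, hpair, hx, ← haq]
  have hfinj : Set.InjOn f (Finset.range n) := by
    intro k hk l hl hkl
    simp only [Finset.coe_range, Set.mem_Iio] at hk hl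
    have := hinj hkl
    have hq2 : ((((x + k) / n : ℚ) : Q')) = (((x + l) / n : ℚ) : Q') := by
      exact congrArg Prod.fst (ofAdd.injective this)
    rw [QuotientAddGroup.eq_iff_sub_mem] at hq2
    obtain ⟨c, hc⟩ := AddSubgroup.mem_zmultiples_iff.1 hq2
    have hc' : (x + k) / n - (x + l) / n = (c : ℚ) := by
      rw [← hc]; simp
    have hc2 : (k : ℚ) - l = c * n := by
      field_simp at hc'
      linarith [hc']
    have hc3 : (k : ℤ) - l = c * n := by exact_mod_cast hc2
    have hkn : (k : ℤ) < n := by exact_mod_cast hk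
    have hln : (l : ℤ) < n := by exact_mod_cast hl
    have hk0 : (0 : ℤ) ≤ k := Int.ofNat_nonneg k
    have hl0 : (0 : ℤ) ≤ l := Int.ofNat_nonneg l
    have hn0 : (0 : ℤ) < n := by exact_mod_cast hn1
    have hc0 : c = 0 := by
      rcases lt_trichotomy c 0 with hcs | hcs | hcs
      · have h1' : c ≤ -1 := by omega
        have : c * (n : ℤ) ≤ -1 * n := mul_le_mul_of_nonneg_right h1' (le_of_lt hn0)
        linarith
      · exact hcs
      · have h1' : 1 ≤ c := by omega
        have : 1 * (n : ℤ) ≤ c * n := mul_le_mul_of_nonneg_right h1' (le_of_lt hn0)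
        linarith
    rw [hc0] at hc3
    have : (k : ℤ) = l := by linarith
    exact_mod_cast this
  set s : Finset B := (Finset.range n).image f with hs
  have hcard : s.card = n := by
    rw [hs, Finset.card_image_of_injOn hfinj, Finset.card_range]
  by_cases hus : u ∈ s
  · rw [hs] at hus
    obtain ⟨k, -, hfk⟩ := Finset.mem_image.1 hus
    exact ⟨_, hfk⟩
  · exfalso
    have hall : ∀ y ∈ insert u s, y ^ n = φ a := by
      intro y hy
      rcases Finset.mem_insert.1 hy with rfl | hy
      · exact ha.symm
      · obtain ⟨k, -, rfl⟩ := Finset.mem_image.1 hy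
        exact hfpow k
    have := h5 a n hn1 (insert u s) hall
    rw [Finset.card_insert_of_notMem hus, hcard] at this
    omega

theorem surj (h1 : ∀ a, IsUnit (φ a) → IsUnit a)
    (h2 : ∀ b : B, ¬ IsUnit b → ∃ a, ∃ b' : B, ¬ IsUnit a ∧ b = φ a * b')
    (h4 : ∀ b : B, ∃ n : ℕ, 1 ≤ n ∧ b ^ n ∈ Set.range φ)
    (h5 : ∀ a, ∀ n : ℕ, 1 ≤ n →
      ∀ s : Finset B, (∀ x ∈ s, x ^ n = φ a) → s.card ≤ n)
    (h7 : ∀ a, ∀ x y : B, φ a * x = φ a * y → x = y)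
    (hinj : Function.Injective φ) :
    Function.Surjective φ := by
  set t := φ (ofAdd ((0 : Q'), 1)) with ht
  have step : ∀ e : B, ¬ IsUnit e → ∃ e', e = t * e' := by
    intro e he
    obtain ⟨a, b', hna, rfl⟩ := h2 e he
    obtain ⟨⟨q, m⟩, rfl⟩ : ∃ p : Q' × ℕ, a = ofAdd p := ⟨toAdd a, (ofAdd_toAdd a).symm⟩
    have hm : m ≠ 0 := by
      intro h0
      exact hna ((isUnit_iff _).2 h0)
    obtain ⟨m', rfl⟩ : ∃ m', m = m' + 1 := ⟨m - 1, by omega⟩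
    refine ⟨φ (ofAdd (q, 0)) * t ^ m' * b', ?_⟩
    rw [hfac φ q (m' + 1), pow_succ, ← ht]
    ac_rfl
  have hdesc : ∀ k : ℕ, ∀ b : B, b ∈ Set.range φ ∨ ∃ e, b = t ^ k * e := by
    intro k
    induction k with
    | zero => intro b; exact Or.inr ⟨b, by rw [pow_zero, one_mul]⟩
    | succ k ih =>
      intro b
      rcases ih b with hb | ⟨e, rfl⟩
      · exact Or.inl hb
      · by_cases he : IsUnit e
        · left
          obtain ⟨a', ha'⟩ := units_mem φ h1 h4 h5 hinj e he
          refine ⟨ofAdd ((0 : Q'), k) * a', ?_⟩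
          rw [map_mul, ha', htk φ k]
        · right
          obtain ⟨e', rfl⟩ := step e he
          exact ⟨e', by rw [pow_succ]; ac_rfl⟩
  intro b
  obtain ⟨n, hn1, a, ha⟩ := h4 b
  obtain ⟨n', rfl⟩ : ∃ n', n = n' + 1 := ⟨n - 1, by omega⟩
  obtain ⟨⟨q, m⟩, rfl⟩ : ∃ p : Q' × ℕ, a = ofAdd p := ⟨toAdd a, (ofAdd_toAdd a).symm⟩
  rcases hdesc (m + 1) b with hb | ⟨d, rfl⟩
  · exact hb
  · exfalso
    set c : B := t ^ ((m + 1) * n') * d ^ (n' + 1) with hc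
    have e2 : (t ^ (m + 1) * d) ^ (n' + 1) = t ^ m * (t * c) := by
      rw [mul_pow, ← pow_mul, hc]
      have hexp : (m + 1) * (n' + 1) = m + 1 + (m + 1) * n' := by ring
      rw [hexp, pow_add, pow_add, pow_one]
      ac_rfl
    have e3 : φ (ofAdd ((0:Q'), m)) * φ (ofAdd (q, 0))
        = φ (ofAdd ((0:Q'), m)) * (t * c) := by
      rw [htk φ m]
      rw [mul_comm (t ^ m) (φ (ofAdd (q, 0))), ← hfac φ q m, ha, e2]
    have e4 := h7 _ _ _ e3
    have hqu : IsUnit (ofAdd (q, (0:ℕ)) : A') := (isUnit_iff _).2 rfl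
    have : IsUnit (t * c) := e4 ▸ hqu.map φ
    exact t_not_unit φ h1 (isUnit_of_mul_isUnit_left this)

end

end Stmt4Aux

/-- Proposition 3.2: Let `A = (ℚ/ℤ) × ℕ` written multiplicatively and let
`φ : A →* B` be a local, unramified, finite and flat homomorphism of commutative monoids,
i.e. satisfying (1)–(7) below.  Then `φ` is an isomorphism (bijective). -/
theorem stmt_4 (B : Type*) [CommMonoid B]
    (φ : Multiplicative ((ℚ ⧸ AddSubgroup.zmultiples (1 : ℚ)) × ℕ) →* B)
    -- (1) φ is local
    (h1 : ∀ a, IsUnit (φ a) → IsUnit a)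
    -- (2) φ(m_A)·B = m_B
    (h2 : ∀ b : B, ¬ IsUnit b → ∃ a, ∃ b' : B, ¬ IsUnit a ∧ b = φ a * b')
    -- (3) φ is injective on units
    (h3 : ∀ a a', IsUnit a → IsUnit a' → φ a = φ a' → a = a')
    -- (4) B is algebraic over φ(A)
    (h4 : ∀ b : B, ∃ n : ℕ, 1 ≤ n ∧ b ^ n ∈ Set.range φ)
    -- (5) x^n = φ(a) has at most n solutions in B
    (h5 : ∀ a, ∀ n : ℕ, 1 ≤ n →
      ∀ s : Finset B, (∀ x ∈ s, x ^ n = φ a) → s.card ≤ n)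
    -- (6) B is a finitely generated A-module
    (h6 : ∃ (r : ℕ) (c : Fin r → B), ∀ x : B, ∃ (i : Fin r), ∃ a, x = φ a * c i)
    -- (7) the A-action on B is cancellative
    (h7 : ∀ a, ∀ x y : B, φ a * x = φ a * y → x = y) :
    Function.Bijective φ := by
  have hinj := Stmt4Aux.inj φ h1 h3 h7
  exact ⟨hinj, Stmt4Aux.surj φ h1 h2 h4 h5 h7 hinj⟩
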